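/- arXiv:2201.06601 — 2 statements merged into one kernel-verified Lean document; each statement's English description precedes it below -/
import Mathlib

section
/- Let a, b be real numbers with 0 < a < 1 and let s = a + ib. If ζ(s) = 0, then (a−1)/((a−1)² + b²) = ∫₁^∞ {x} · cos(b·ln(x)) / x^{1+a} dx. -/
open MeasureTheory Set Real Complex Filter Asymptotics

noncomputable def Gz (s : ℂ) : ℂ :=
  ∫ x : ℝ in Set.Ioi (1:ℝ), ((Int.fract x : ℝ) : ℂ) * (x:ℂ) ^ (-s - 1)

noncomputable def gz : ℝ → ℂ := Set.indicator (Set.Ioi 1) (fun x : ℝ => ((Int.fract x : ℝ) : ℂ))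

lemma Gz_integrable {s : ℂ} (hs : 0 < s.re) :
    IntegrableOn (fun x : ℝ => ((Int.fract x : ℝ) : ℂ) * (x:ℂ) ^ (-s - 1)) (Set.Ioi 1) := by
  apply MeasureTheory.Integrable.mono' (g := fun x : ℝ => x ^ (-1 - s.re))
    (integrableOn_Ioi_rpow_of_lt (by linarith) zero_lt_one)
  · apply AEStronglyMeasurable.mul
    · exact (Complex.measurable_ofReal.comp measurable_fract).aestronglyMeasurable
    · refine (ContinuousOn.aestronglyMeasurable ?_ measurableSet_Ioi)
      intro x hx
      exact (continuousAt_ofReal_cpow_const _ _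
        (Or.inr (lt_trans zero_lt_one hx).ne')).continuousWithinAt
  · rw [ae_restrict_iff' measurableSet_Ioi]
    filter_upwards with x hx
    have hx0 : (0:ℝ) < x := lt_trans zero_lt_one hx
    rw [norm_mul, Complex.norm_real,
      Complex.norm_cpow_eq_rpow_re_of_pos hx0]
    have h2 : ((-s - 1).re) = -1 - s.re := by simp; ring
    rw [h2]
    calc ‖Int.fract x‖ * x ^ (-1 - s.re) ≤ 1 * x ^ (-1 - s.re) := by
          apply mul_le_mul_of_nonneg_right _ (Real.rpow_nonneg hx0.le _)
          rw [Real.norm_eq_abs, _root_.abs_of_nonneg (Int.fract_nonneg x)]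
          exact (Int.fract_lt_one x).le
      _ = x ^ (-1 - s.re) := one_mul _

lemma gz_eq (s : ℂ) : Gz s = mellin gz (-s) := by
  rw [Gz, mellin, ← MeasureTheory.integral_indicator (measurableSet_Ioi (a := (1:ℝ))),
    ← MeasureTheory.integral_indicator (measurableSet_Ioi (a := (0:ℝ)))]
  congr 1
  ext x
  by_cases h1 : (1:ℝ) < x
  · have h0 : (0:ℝ) < x := lt_trans zero_lt_one h1
    rw [Set.indicator_of_mem (mem_Ioi.mpr h1), Set.indicator_of_mem (mem_Ioi.mpr h0), gz,
      Set.indicator_of_mem (mem_Ioi.mpr h1), smul_eq_mul, mul_comm]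
  · rw [Set.indicator_of_notMem (by simpa using h1)]
    by_cases h0 : (0:ℝ) < x
    · rw [Set.indicator_of_mem (mem_Ioi.mpr h0), gz,
        Set.indicator_of_notMem (by simpa using h1), smul_zero]
    · rw [Set.indicator_of_notMem (by simpa using h0)]

lemma gz_meas : Measurable gz :=
  (Complex.measurable_ofReal.comp measurable_fract).indicator measurableSet_Ioi

lemma gz_norm_le (x : ℝ) : ‖gz x‖ ≤ 1 := by
  rw [gz]
  by_cases h : x ∈ Set.Ioi (1:ℝ)
  · rw [Set.indicator_of_mem h, Complex.norm_real, Real.norm_eq_abs,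
      _root_.abs_of_nonneg (Int.fract_nonneg x)]
    exact (Int.fract_lt_one x).le
  · rw [Set.indicator_of_notMem h]; simp

lemma gz_loc : LocallyIntegrableOn gz (Set.Ioi 0) := by
  apply MeasureTheory.LocallyIntegrable.locallyIntegrableOn
  rw [MeasureTheory.locallyIntegrable_iff]
  intro K hK
  apply MeasureTheory.Integrable.mono' (g := fun _ => (1:ℝ))
    (integrableOn_const (hs := hK.measure_lt_top.ne))
    (gz_meas.aestronglyMeasurable.restrict)
  filter_upwards with x using gz_norm_le x

lemma mellin_gz_diff {s : ℂ} (hs : 0 < s.re) : DifferentiableAt ℂ (mellin gz) (-s) := by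
  apply mellin_differentiableAt_of_isBigO_rpow (a := 0) (b := -s.re - 1) gz_loc
  · rw [isBigO_iff]
    refine ⟨1, ?_⟩
    filter_upwards [eventually_ge_atTop (1:ℝ)] with x hx
    rw [Real.rpow_neg (by linarith), Real.rpow_zero]
    simpa using gz_norm_le x
  · simpa using hs
  · rw [isBigO_iff]
    refine ⟨0, ?_⟩
    filter_upwards [Ioo_mem_nhdsGT_of_mem (by norm_num : (0:ℝ) ∈ Set.Ico 0 1)] with x hx
    rw [gz, Set.indicator_of_notMem (by simp; linarith [hx.2])]
    simp
  · simp only [Complex.neg_re]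
    linarith

lemma Gz_diff {s : ℂ} (hs : 0 < s.re) : DifferentiableAt ℂ Gz s := by
  have h : Gz = fun s => mellin gz (-s) := funext fun s => gz_eq s
  rw [h]
  exact (mellin_gz_diff hs).comp s (differentiableAt_id.neg)

lemma real_integrable {s : ℝ} (hs : 0 < s) :
    IntegrableOn (fun x : ℝ => Int.fract x * x ^ (-s - 1)) (Set.Ioi 1) := by
  apply MeasureTheory.Integrable.mono' (g := fun x : ℝ => x ^ (-s - 1))
    (integrableOn_Ioi_rpow_of_lt (by linarith) zero_lt_one)
  · apply AEStronglyMeasurable.mul measurable_fract.aestronglyMeasurable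
    refine (ContinuousOn.aestronglyMeasurable ?_ measurableSet_Ioi)
    intro x hx
    exact (Real.continuousAt_rpow_const _ _
      (Or.inl (lt_trans zero_lt_one hx).ne')).continuousWithinAt
  · rw [ae_restrict_iff' measurableSet_Ioi]
    filter_upwards with x hx
    have hx0 : (0:ℝ) < x := lt_trans zero_lt_one hx
    rw [Real.norm_eq_abs, abs_mul, _root_.abs_of_nonneg (Int.fract_nonneg x),
      _root_.abs_of_nonneg (Real.rpow_nonneg hx0.le _)]
    calc Int.fract x * x ^ (-s-1) ≤ 1 * x ^ (-s-1) :=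
          mul_le_mul_of_nonneg_right (Int.fract_lt_one x).le (Real.rpow_nonneg hx0.le _)
      _ = x ^ (-s-1) := one_mul _

lemma Ioi_union : Set.Ioi (1:ℝ) = ⋃ n : ℕ, Set.Ioc ((n:ℝ)+1) ((n:ℝ)+2) := by
  ext x
  simp only [Set.mem_Ioi, Set.mem_iUnion, Set.mem_Ioc]
  constructor
  · intro hx
    have hx0 : 0 ≤ x := by linarith
    refine ⟨⌈x⌉₊ - 2, ?_, ?_⟩
    · have h2 : 2 ≤ ⌈x⌉₊ := by
        have h : 1 < ⌈x⌉₊ := by rw [Nat.lt_ceil]; push_cast; linarith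
        omega
      have h3 : (↑(⌈x⌉₊ - 2) : ℝ) = (⌈x⌉₊ : ℝ) - 2 := by
        push_cast [h2]; ring
      rw [h3]
      have := Nat.ceil_lt_add_one hx0
      linarith
    · have h2 : 2 ≤ ⌈x⌉₊ := by
        have h : 1 < ⌈x⌉₊ := by rw [Nat.lt_ceil]; push_cast; linarith
        omega
      have h3 : (↑(⌈x⌉₊ - 2) : ℝ) = (⌈x⌉₊ : ℝ) - 2 := by
        push_cast [h2]; ring
      rw [h3]
      have := Nat.le_ceil x
      linarith
  · rintro ⟨n, hn1, _⟩
    have : (0:ℝ) ≤ n := Nat.cast_nonneg n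
    linarith

lemma piece_eq (n : ℕ) (s : ℝ) :
    ∫ x in Set.Ioc ((n:ℝ)+1) ((n:ℝ)+2), Int.fract x * x ^ (-s - 1) =
      ZetaAsymptotics.term (n+1) s := by
  rw [ZetaAsymptotics.term, intervalIntegral.integral_of_le (by push_cast; linarith)]
  have hc : ((n:ℝ)+1+1) = (n:ℝ)+2 := by ring
  rw [show ((n+1 : ℕ) : ℝ) = (n:ℝ)+1 by push_cast; ring]
  rw [hc]
  apply MeasureTheory.setIntegral_congr_ae measurableSet_Ioc
  have hae : ∀ᵐ x : ℝ, x ≠ (n:ℝ)+2 := by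
    rw [MeasureTheory.ae_iff]
    convert Real.volume_singleton (a := (n:ℝ)+2) using 2
    ext y; simp
  filter_upwards [hae] with x hne hx
  have h1 : (n:ℝ)+1 < x := hx.1
  have h2 : x < (n:ℝ)+2 := lt_of_le_of_ne hx.2 hne
  have hfl : Int.fract x = x - ((n:ℝ)+1) := by
    rw [Int.fract]
    congr 1
    have h3 : ⌊x⌋ = (n:ℤ) + 1 := by
      rw [Int.floor_eq_iff]
      constructor <;> push_cast <;> linarith
    rw [h3]; push_cast; ring
  have hx0 : (0:ℝ) < x := by linarith [Nat.cast_nonneg (α := ℝ) n]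
  rw [hfl, show -s-1 = -(s+1) by ring, Real.rpow_neg hx0.le, div_eq_mul_inv]

lemma integral_eq_tsum {s : ℝ} (hs : 0 < s) :
    (∫ x in Set.Ioi (1:ℝ), Int.fract x * x ^ (-s - 1)) = ZetaAsymptotics.term_tsum s := by
  rw [Ioi_union, MeasureTheory.integral_iUnion (fun n => measurableSet_Ioc) ?_ ?_,
    ZetaAsymptotics.term_tsum]
  · exact tsum_congr fun n => piece_eq n s
  · intro m n h
    rw [Function.onFun, Set.Ioc_disjoint_Ioc]
    rcases h.lt_or_gt with h | h
    · exact min_le_of_left_le (le_max_of_le_right (by exact_mod_cast by omega))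
    · exact min_le_of_right_le (le_max_of_le_left (by exact_mod_cast by omega))
  · rw [← Ioi_union]; exact real_integrable hs

lemma Gz_real {s : ℝ} (hs : 0 < s) :
    Gz (s : ℂ) = ((ZetaAsymptotics.term_tsum s : ℝ) : ℂ) := by
  rw [Gz, ← integral_eq_tsum hs]
  refine Eq.trans ?_ (integral_ofReal (𝕜 := ℂ))
  apply MeasureTheory.setIntegral_congr_fun measurableSet_Ioi
  intro x hx
  have hx0 : (0:ℝ) ≤ x := by have : (1:ℝ) < x := hx; linarith
  simp only []
  rw [show -(s:ℂ) - 1 = ((-s - 1 : ℝ) : ℂ) by push_cast; ring,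
    ← Complex.ofReal_cpow hx0, ← Complex.ofReal_mul]
  rfl

lemma zeta_eq_real {s : ℝ} (hs : 1 < s) :
    riemannZeta (s : ℂ) = s / (s - 1) - s * Gz s := by
  have hs0 : (0:ℝ) < s := by linarith
  rw [Gz_real hs0, ZetaAsymptotics.term_tsum, ZetaAsymptotics.term_tsum_of_lt hs]
  have hT : riemannZeta (s : ℂ) = ((∑' n : ℕ, 1 / (n + 1 : ℝ) ^ s : ℝ) : ℂ) := by
    rw [zeta_eq_tsum_one_div_nat_add_one_cpow (by simpa using hs), Complex.ofReal_tsum]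
    congr 1 with n
    rw [Complex.ofReal_div, Complex.ofReal_one, Complex.ofReal_cpow (by positivity)]
    norm_cast
  rw [hT]
  have h1 : ((s:ℂ)) ≠ 0 := by exact_mod_cast hs0.ne'
  have h2 : ((s:ℂ)) - 1 ≠ 0 := by
    rw [show ((s:ℂ)) - 1 = ((s - 1 : ℝ) : ℂ) by push_cast; ring]
    exact_mod_cast (by linarith : s - 1 ≠ 0)
  push_cast
  field_simp
  ring

def U : Set ℂ := {s | 0 < s.re} \ {1}

lemma U_open : IsOpen U :=
  (isOpen_lt continuous_const Complex.continuous_re).inter isOpen_compl_singleton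

lemma U_preconnected : IsPreconnected U := by
  have P1 : Convex ℝ {s : ℂ | 0 < s.re ∧ 0 < s.im} :=
    (convex_halfSpace_re_gt 0).inter (convex_halfSpace_im_gt 0)
  have P2 : Convex ℝ {s : ℂ | 0 < s.re ∧ s.im < 0} :=
    (convex_halfSpace_re_gt 0).inter (convex_halfSpace_im_lt 0)
  have P3 : Convex ℝ {s : ℂ | 0 < s.re ∧ s.re < 1} :=
    (convex_halfSpace_re_gt 0).inter (convex_halfSpace_re_lt 1)
  have P4 : Convex ℝ {s : ℂ | 1 < s.re} := convex_halfSpace_re_gt 1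
  have h13 : (⟨1/2, 1/2⟩ : ℂ) ∈ {s : ℂ | 0 < s.re ∧ 0 < s.im} ∩ {s : ℂ | 0 < s.re ∧ s.re < 1} := by
    constructor <;> constructor <;> norm_num
  have Q1 : IsPreconnected ({s : ℂ | 0 < s.re ∧ 0 < s.im} ∪ {s : ℂ | 0 < s.re ∧ s.re < 1}) :=
    IsPreconnected.union _ h13.1 h13.2 P1.isPreconnected P3.isPreconnected
  have h14 : (⟨2, 1⟩ : ℂ) ∈ ({s : ℂ | 0 < s.re ∧ 0 < s.im} ∪ {s : ℂ | 0 < s.re ∧ s.re < 1}) ∩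
      {s : ℂ | 1 < s.re} := by
    constructor
    · left; constructor <;> norm_num
    · norm_num
  have Q2 : IsPreconnected (({s : ℂ | 0 < s.re ∧ 0 < s.im} ∪ {s : ℂ | 0 < s.re ∧ s.re < 1}) ∪
      {s : ℂ | 1 < s.re}) :=
    IsPreconnected.union _ h14.1 h14.2 Q1 P4.isPreconnected
  have h15 : (⟨1/2, -1/2⟩ : ℂ) ∈ (({s : ℂ | 0 < s.re ∧ 0 < s.im} ∪ {s : ℂ | 0 < s.re ∧ s.re < 1}) ∪
      {s : ℂ | 1 < s.re}) ∩ {s : ℂ | 0 < s.re ∧ s.im < 0} := by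
    constructor
    · left; right; constructor <;> norm_num
    · constructor <;> norm_num
  have Q3 : IsPreconnected ((({s : ℂ | 0 < s.re ∧ 0 < s.im} ∪ {s : ℂ | 0 < s.re ∧ s.re < 1}) ∪
      {s : ℂ | 1 < s.re}) ∪ {s : ℂ | 0 < s.re ∧ s.im < 0}) :=
    IsPreconnected.union _ h15.1 h15.2 Q2 P2.isPreconnected
  have hU : U = (({s : ℂ | 0 < s.re ∧ 0 < s.im} ∪ {s : ℂ | 0 < s.re ∧ s.re < 1}) ∪
      {s : ℂ | 1 < s.re}) ∪ {s : ℂ | 0 < s.re ∧ s.im < 0} := by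
    ext s
    simp only [U, Set.mem_diff, Set.mem_setOf_eq, Set.mem_singleton_iff, Set.mem_union]
    constructor
    · rintro ⟨h0, h1⟩
      rcases lt_trichotomy s.im 0 with h | h | h
      · right; exact ⟨h0, h⟩
      · rcases lt_trichotomy s.re 1 with hr | hr | hr
        · left; left; right; exact ⟨h0, hr⟩
        · exfalso; apply h1; apply Complex.ext <;> simp [hr, h]
        · left; right; exact hr
      · left; left; left; exact ⟨h0, h⟩
    · rintro ((( ⟨h0, h⟩ | ⟨h0, h⟩) | h) | ⟨h0, h⟩)
      · exact ⟨h0, fun he => by rw [he] at h; simp at h⟩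
      · exact ⟨h0, fun he => by rw [he] at h; simp at h⟩
      · exact ⟨by linarith, fun he => by rw [he] at h; simp at h⟩
      · exact ⟨h0, fun he => by rw [he] at h; simp at h⟩
  rw [hU]
  exact Q3

lemma zeta_eq_U : Set.EqOn riemannZeta (fun s => s / (s - 1) - s * Gz s) U := by
  apply AnalyticOnNhd.eqOn_of_preconnected_of_frequently_eq (z₀ := 2)
  · refine DifferentiableOn.analyticOnNhd (fun s hs => ?_) U_open
    exact (differentiableAt_riemannZeta (fun he => hs.2 (by simp [he]))).differentiableWithinAt
  · refine DifferentiableOn.analyticOnNhd (fun s hs => ?_) U_open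
    have hne : s - 1 ≠ 0 := sub_ne_zero.mpr (fun he => hs.2 (by simp [he]))
    have hd1 : DifferentiableAt ℂ (fun z : ℂ => z / (z - 1)) s :=
      DifferentiableAt.div differentiableAt_id (differentiableAt_id.sub_const 1) hne
    have hd2 : DifferentiableAt ℂ (fun z : ℂ => z * Gz z) s :=
      differentiableAt_id.mul (Gz_diff hs.1)
    exact (hd1.sub hd2).differentiableWithinAt
  · exact U_preconnected
  · constructor
    · show (0:ℝ) < (2:ℂ).re
      norm_num
    · norm_num
  · have hto : Tendsto (fun n : ℕ => ((2 + 1/(n+1 : ℝ) : ℝ) : ℂ)) atTop (nhdsWithin 2 {(2:ℂ)}ᶜ) := by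
      apply tendsto_nhdsWithin_of_tendsto_nhds_of_eventually_within
      · have : Tendsto (fun n : ℕ => (2 + 1/(n+1 : ℝ) : ℝ)) atTop (nhds 2) := by
          have h0 : Tendsto (fun n : ℕ => 1/(n+1 : ℝ)) atTop (nhds 0) :=
            tendsto_one_div_add_atTop_nhds_zero_nat
          simpa using (tendsto_const_nhds (x := (2:ℝ))).add h0
        exact (Complex.continuous_ofReal.tendsto 2).comp this
      · filter_upwards with n
        simp only [Set.mem_compl_iff, Set.mem_singleton_iff]
        intro he
        have : (2 + 1/(n+1 : ℝ) : ℝ) = 2 := by exact_mod_cast he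
        have hp : (0:ℝ) < 1/(n+1 : ℝ) := by positivity
        linarith
    apply hto.frequently
    apply Filter.Eventually.frequently
    filter_upwards with n
    have h1 : (1:ℝ) < 2 + 1/(n+1 : ℝ) := by
      have hp : (0:ℝ) < 1/(n+1 : ℝ) := by positivity
      linarith
    exact zeta_eq_real h1

theorem re_part_eq_one (a b : ℝ) (h0 : 0 < a) (h1 : a < 1)
    (hz : riemannZeta (a + b * Complex.I) = 0) :
    (a - 1) / ((a - 1) ^ 2 + b ^ 2) =
      ∫ x : ℝ in Set.Ioi (1 : ℝ), Int.fract x * Real.cos (b * Real.log x) / x ^ (1 + a) := by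
  set s : ℂ := a + b * Complex.I with hsdef
  have hre : s.re = a := by simp [hsdef]
  have him : s.im = b := by simp [hsdef]
  have hs_pos : 0 < s.re := by rw [hre]; exact h0
  have hsU : s ∈ U := by
    refine ⟨hs_pos, fun he => ?_⟩
    rw [Set.mem_singleton_iff] at he
    have : s.re = 1 := by rw [he]; simp
    rw [hre] at this; linarith
  have hid := zeta_eq_U hsU
  rw [hz] at hid
  have hs0 : s ≠ 0 := fun he => by rw [he] at hre; simp at hre; linarith
  have hs1 : s - 1 ≠ 0 := by
    intro he
    have : s = 1 := by linear_combination he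
    exact hsU.2 (by simp [this])
  have hG : Gz s = (s - 1)⁻¹ := by
    have h : s * Gz s = s * (s - 1)⁻¹ := by
      have := hid.symm
      simp only [div_eq_mul_inv] at this
      linear_combination -this
    exact mul_left_cancel₀ hs0 h
  have hre_inv : ((s - 1)⁻¹).re = (a - 1) / ((a - 1)^2 + b^2) := by
    rw [Complex.inv_re, Complex.normSq_apply]
    have h1 : (s - 1).re = a - 1 := by simp [hre]
    have h2 : (s - 1).im = b := by simp [him]
    rw [h1, h2]
    ring_nf
  have hGre : (Gz s).re = ∫ x : ℝ in Set.Ioi (1 : ℝ),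
      Int.fract x * Real.cos (b * Real.log x) / x ^ (1 + a) := by
    rw [Gz]
    have hint := integral_re (μ := (MeasureTheory.volume.restrict (Set.Ioi (1:ℝ))))
      (Gz_integrable hs_pos)
    rw [← congrFun (RCLike.re_eq_complex_re) _ , ← hint]
    rw [show (fun x : ℝ => RCLike.re (((Int.fract x : ℝ) : ℂ) * (x:ℂ) ^ (-s - 1))) =
      (fun x : ℝ => (((Int.fract x : ℝ) : ℂ) * (x:ℂ) ^ (-s - 1)).re) from rfl]
    apply MeasureTheory.setIntegral_congr_fun measurableSet_Ioi
    intro x hx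
    have hx1 : (1:ℝ) < x := hx
    have hx0 : (0:ℝ) < x := by linarith
    have hxne : (x:ℂ) ≠ 0 := by exact_mod_cast hx0.ne'
    have hcpow : ((x:ℂ) ^ (-s - 1)) = Complex.exp ((-s-1) * Real.log x) := by
      rw [Complex.cpow_def_of_ne_zero hxne, Complex.ofReal_log hx0.le]
      ring_nf
    have hre2 : ((-s-1) * (Real.log x : ℂ)).re = (-a-1) * Real.log x := by
      simp [Complex.mul_re, hre]
    have him2 : ((-s-1) * (Real.log x : ℂ)).im = -b * Real.log x := by
      simp [Complex.mul_im, him]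
    have : (((x:ℂ) ^ (-s - 1)).re) = x ^ (-a-1) * Real.cos (b * Real.log x) := by
      rw [hcpow, Complex.exp_re, hre2, him2, Real.rpow_def_of_pos hx0]
      rw [show -b * Real.log x = -(b * Real.log x) by ring, Real.cos_neg]
      congr 2
      ring
    simp only []
    rw [Complex.mul_re, Complex.ofReal_re, Complex.ofReal_im, zero_mul, sub_zero, this]
    rw [show (-a-1 : ℝ) = -(1+a) by ring, Real.rpow_neg hx0.le, div_eq_mul_inv]
    ring
  rw [← hre_inv, ← hG, hGre]
end

section
/- Let a, b be real numbers with 0 < a < 1 and let s = a + ib. If ζ(s) = 0, then −a/(a² + b²) = ∫₁^∞ {x} · cos(b·ln(x)) / x^{2−a} dx. -/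
open MeasureTheory Set Filter Complex
open scoped Topology

namespace RePartEqAux

/-- The main integral, as a function of the complex parameter `w`. -/
noncomputable def Iw (w : ℂ) : ℂ :=
  ∫ x : ℝ in Set.Ioi (1 : ℝ), (↑(Int.fract x) : ℂ) * (x : ℂ) ^ (-w - 1)

lemma norm_fract_le (x : ℝ) : ‖(↑(Int.fract x) : ℂ)‖ ≤ 1 := by
  rw [Complex.norm_real, Real.norm_eq_abs, _root_.abs_of_nonneg (Int.fract_nonneg x)]
  exact (Int.fract_lt_one x).le

lemma integrableOn_I {w : ℂ} (hw : 0 < w.re) :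
    IntegrableOn (fun x : ℝ => (↑(Int.fract x) : ℂ) * (x : ℂ) ^ (-w - 1)) (Set.Ioi (1 : ℝ)) := by
  have hmeas : AEStronglyMeasurable (fun x : ℝ => (↑(Int.fract x) : ℂ) * (x : ℂ) ^ (-w - 1))
      (volume.restrict (Set.Ioi (1 : ℝ))) := by
    apply AEStronglyMeasurable.mul
    · exact (Complex.measurable_ofReal.comp measurable_fract).aestronglyMeasurable
    · apply ContinuousOn.aestronglyMeasurable _ measurableSet_Ioi
      intro x hx
      have hx0 : (0 : ℝ) < x := lt_trans zero_lt_one hx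
      exact ((continuousAt_cpow_const (Or.inl (by simpa using hx0))).comp
        Complex.continuous_ofReal.continuousAt).continuousWithinAt
  refine Integrable.mono' (g := fun x : ℝ => x ^ (-w.re - 1))
    (integrableOn_Ioi_rpow_of_lt (by linarith) zero_lt_one) hmeas ?_
  filter_upwards [ae_restrict_mem measurableSet_Ioi] with x hx
  have hx0 : (0 : ℝ) < x := lt_trans zero_lt_one hx
  rw [norm_mul, Complex.norm_cpow_eq_rpow_re_of_pos hx0]
  have h2 : ((-w - 1 : ℂ)).re = -w.re - 1 := by simp
  rw [h2]
  calc ‖(↑(Int.fract x) : ℂ)‖ * x ^ (-w.re - 1)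
      ≤ 1 * x ^ (-w.re - 1) :=
        mul_le_mul_of_nonneg_right (norm_fract_le x) (Real.rpow_nonneg hx0.le _)
    _ = x ^ (-w.re - 1) := one_mul _



lemma intervalIntegrable_cpow' (c : ℂ) {p q : ℝ} (hp : 0 < p) (hq : 0 < q) :
    IntervalIntegrable (fun x : ℝ => (x : ℂ) ^ c) volume p q := by
  apply ContinuousOn.intervalIntegrable
  intro x hx
  rw [Set.uIcc_eq_union] at hx
  have hx0 : 0 < x := by
    rcases hx with h | h
    · exact lt_of_lt_of_le hp h.1
    · exact lt_of_lt_of_le hq h.1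
  exact ((continuousAt_cpow_const (Or.inl (by simpa using hx0))).comp
    Complex.continuous_ofReal.continuousAt).continuousWithinAt

lemma self_mul_cpow {x : ℝ} (hx : 0 < x) (c : ℂ) : (x : ℂ) * (x : ℂ) ^ c = (x : ℂ) ^ (c + 1) := by
  rw [Complex.cpow_add _ _ (by exact_mod_cast hx.ne'), Complex.cpow_one]
  ring

lemma interval_value (w : ℂ) (hw0 : w ≠ 0) (hw1 : w ≠ 1) (k : ℕ) :
    (∫ x in ((k : ℝ) + 1)..((k : ℝ) + 2), (↑(Int.fract x) : ℂ) * (x : ℂ) ^ (-w - 1))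
      = (1 / (1 - w) + 1 / w) *
          ((((k : ℝ) + 2 : ℝ) : ℂ) ^ (1 - w) - (((k : ℝ) + 1 : ℝ) : ℂ) ^ (1 - w))
        - (1 / w) * (((k : ℝ) + 2 : ℝ) : ℂ) ^ (-w) := by
  have h12 : ((k : ℝ) + 1) ≤ ((k : ℝ) + 2) := by linarith
  have hk1 : (0 : ℝ) < (k : ℝ) + 1 := by positivity
  have hk2 : (0 : ℝ) < (k : ℝ) + 2 := by positivity
  -- step 1 : replace `Int.fract x` by `x - (k+1)`
  have step1 : (∫ x in ((k : ℝ) + 1)..((k : ℝ) + 2), (↑(Int.fract x) : ℂ) * (x : ℂ) ^ (-w - 1))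
      = ∫ x in ((k : ℝ) + 1)..((k : ℝ) + 2), ((x : ℂ) - ((k : ℝ) + 1)) * (x : ℂ) ^ (-w - 1) := by
    rw [intervalIntegral.integral_of_le h12, intervalIntegral.integral_of_le h12,
      MeasureTheory.integral_Ioc_eq_integral_Ioo, MeasureTheory.integral_Ioc_eq_integral_Ioo]
    apply setIntegral_congr_fun measurableSet_Ioo
    intro x hx
    have hfl : ⌊x⌋ = (k : ℤ) + 1 := by
      rw [Int.floor_eq_iff]
      constructor
      · push_cast; exact hx.1.le
      · push_cast; linarith [hx.2]
    have : Int.fract x = x - ((k : ℝ) + 1) := by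
      rw [Int.fract, hfl]; push_cast; ring
    simp only [this]; push_cast; ring
  rw [step1]
  -- step 2 : expand the product
  have step2 : (∫ x in ((k : ℝ) + 1)..((k : ℝ) + 2), ((x : ℂ) - ((k : ℝ) + 1)) * (x : ℂ) ^ (-w - 1))
      = ∫ x in ((k : ℝ) + 1)..((k : ℝ) + 2),
          ((x : ℂ) ^ (-w) - (((k : ℝ) + 1 : ℝ) : ℂ) * (x : ℂ) ^ (-w - 1)) := by
    apply intervalIntegral.integral_congr
    intro x hx
    rw [Set.uIcc_of_le h12] at hx
    have hx0 : (0 : ℝ) < x := lt_of_lt_of_le hk1 hx.1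
    have : (x : ℂ) ^ (-w) = (x : ℂ) * (x : ℂ) ^ (-w - 1) := by
      rw [self_mul_cpow hx0]; ring_nf
    simp only [this]; push_cast; ring
  rw [step2]
  have hnot : (0 : ℝ) ∉ Set.uIcc ((k : ℝ) + 1) ((k : ℝ) + 2) := by
    rw [Set.uIcc_of_le h12]
    intro h
    exact absurd h.1 (by linarith)
  have hint1 : IntervalIntegrable (fun x : ℝ => (x : ℂ) ^ (-w))
      volume ((k : ℝ) + 1) ((k : ℝ) + 2) := intervalIntegrable_cpow' _ hk1 hk2
  have hint2 : IntervalIntegrable (fun x : ℝ => (((k : ℝ) + 1 : ℝ) : ℂ) * (x : ℂ) ^ (-w - 1))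
      volume ((k : ℝ) + 1) ((k : ℝ) + 2) :=
    (intervalIntegrable_cpow' _ hk1 hk2).const_mul _
  rw [intervalIntegral.integral_sub hint1 hint2, intervalIntegral.integral_const_mul,
    integral_cpow (Or.inr ⟨by simpa using hw1, hnot⟩),
    integral_cpow (Or.inr ⟨by simpa [sub_eq_iff_eq_add] using hw0, hnot⟩)]
  have e1 : -w + 1 = 1 - w := by ring
  have e2 : -w - 1 + 1 = -w := by ring
  rw [e1, e2]
  -- closed-form algebra
  have hb : ((((k : ℝ) + 2 : ℝ) : ℂ)) ^ (1 - w) = (((k : ℝ) + 2 : ℝ) : ℂ) * (((k : ℝ) + 2 : ℝ) : ℂ) ^ (-w) := by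
    rw [self_mul_cpow hk2]; ring_nf
  have ha : ((((k : ℝ) + 1 : ℝ) : ℂ)) ^ (1 - w) = (((k : ℝ) + 1 : ℝ) : ℂ) * (((k : ℝ) + 1 : ℝ) : ℂ) ^ (-w) := by
    rw [self_mul_cpow hk1]; ring_nf
  have hw1' : (1 : ℂ) - w ≠ 0 := by
    intro h; exact hw1 (sub_eq_zero.mp h).symm
  rw [hb, ha]
  push_cast
  field_simp [hw0, hw1']
  ring

lemma keyC {w : ℂ} (hw : 1 < w.re) : Iw w = 1 / (w - 1) - riemannZeta w / w := by
  have hw0 : w ≠ 0 := by intro h; rw [h] at hw; simp at hw; linarith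
  have hw1 : w ≠ 1 := by intro h; rw [h] at hw; simp at hw
  have hwpos : 0 < w.re := by linarith
  set c₀ : ℂ := 1 / (1 - w) + 1 / w with hc₀
  -- the sequence of partial integrals
  have T0 : Tendsto (fun N : ℕ => ∫ x in (1 : ℝ)..((N : ℝ) + 1),
      (↑(Int.fract x) : ℂ) * (x : ℂ) ^ (-w - 1)) atTop (𝓝 (Iw w)) := by
    apply MeasureTheory.intervalIntegral_tendsto_integral_Ioi 1 (integrableOn_I hwpos)
    exact tendsto_atTop_add_const_right _ 1 tendsto_natCast_atTop_atTop
  -- rewrite each partial integral as a closed form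
  have heq : ∀ N : ℕ, (∫ x in (1 : ℝ)..((N : ℝ) + 1),
      (↑(Int.fract x) : ℂ) * (x : ℂ) ^ (-w - 1))
      = c₀ * ((((N : ℝ) + 1 : ℝ) : ℂ) ^ (1 - w) - 1)
        - (1 / w) * ∑ k ∈ Finset.range N, (((k : ℝ) + 2 : ℝ) : ℂ) ^ (-w) := by
    intro N
    have hadj : ∀ k < N, IntervalIntegrable
        (fun x : ℝ => (↑(Int.fract x) : ℂ) * (x : ℂ) ^ (-w - 1)) volume
        ((k : ℝ) + 1) (((k + 1 : ℕ) : ℝ) + 1) := by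
      intro k _
      rw [intervalIntegrable_iff_integrableOn_Ioc_of_le (by push_cast; linarith)]
      apply (integrableOn_I hwpos).mono_set
      intro x hx
      have : (1 : ℝ) ≤ (k : ℝ) + 1 := by
        have := Nat.cast_nonneg (α := ℝ) k; linarith
      exact lt_of_lt_of_le (lt_of_le_of_lt this hx.1) le_rfl
    have := intervalIntegral.sum_integral_adjacent_intervals
      (a := fun k : ℕ => (k : ℝ) + 1) (n := N) (μ := volume)
      (f := fun x : ℝ => (↑(Int.fract x) : ℂ) * (x : ℂ) ^ (-w - 1)) (by exact_mod_cast hadj)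
    simp only [Nat.cast_zero, zero_add] at this
    rw [← this]
    have hterm : ∀ k ∈ Finset.range N,
        (∫ x in ((k : ℝ) + 1)..(((k + 1 : ℕ) : ℝ) + 1),
          (↑(Int.fract x) : ℂ) * (x : ℂ) ^ (-w - 1))
        = (c₀ * ((((k : ℝ) + 2 : ℝ) : ℂ) ^ (1 - w) - (((k : ℝ) + 1 : ℝ) : ℂ) ^ (1 - w))
            - (1 / w) * (((k : ℝ) + 2 : ℝ) : ℂ) ^ (-w)) := by
      intro k _
      have : (((k + 1 : ℕ) : ℝ) + 1) = (k : ℝ) + 2 := by push_cast; ring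
      rw [this, interval_value w hw0 hw1 k]
    rw [Finset.sum_congr rfl hterm, Finset.sum_sub_distrib, ← Finset.mul_sum, ← Finset.mul_sum]
    congr 1
    -- telescoping
    have := Finset.sum_range_sub (f := fun n : ℕ => (((n : ℝ) + 1 : ℝ) : ℂ) ^ (1 - w)) N
    have e : ∀ k : ℕ, ((((k + 1 : ℕ) : ℝ) + 1 : ℝ) : ℂ) ^ (1 - w) = (((k : ℝ) + 2 : ℝ) : ℂ) ^ (1 - w) := by
      intro k; push_cast; congr 1; ring
    simp only [e] at this
    rw [this]
    norm_num
  -- limits of the two pieces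
  have T1 : Tendsto (fun N : ℕ => (((N : ℝ) + 1 : ℝ) : ℂ) ^ (1 - w)) atTop (𝓝 0) := by
    rw [tendsto_zero_iff_norm_tendsto_zero]
    have hnorm : (fun N : ℕ => ‖(((N : ℝ) + 1 : ℝ) : ℂ) ^ (1 - w)‖)
        = fun N : ℕ => ((N : ℝ) + 1) ^ (-(w.re - 1)) := by
      funext N
      rw [Complex.norm_cpow_eq_rpow_re_of_pos (by positivity)]
      norm_num
    rw [hnorm]
    exact (tendsto_rpow_neg_atTop (by linarith)).comp
      (tendsto_atTop_add_const_right _ 1 tendsto_natCast_atTop_atTop)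
  have hsummable : Summable (fun n : ℕ => 1 / (n : ℂ) ^ w) :=
    (Complex.summable_one_div_nat_cpow).mpr hw
  have T2 : Tendsto (fun N : ℕ => ∑ k ∈ Finset.range N, (((k : ℝ) + 2 : ℝ) : ℂ) ^ (-w))
      atTop (𝓝 (riemannZeta w - 1)) := by
    have hζ : riemannZeta w = ∑' n : ℕ, 1 / (n : ℂ) ^ w := zeta_eq_tsum_one_div_nat_cpow hw
    have hts : Tendsto (fun N : ℕ => ∑ n ∈ Finset.range N, 1 / (n : ℂ) ^ w) atTop
        (𝓝 (riemannZeta w)) := by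
      rw [hζ]; exact hsummable.hasSum.tendsto_sum_nat
    have hts2 : Tendsto (fun N : ℕ => (∑ n ∈ Finset.range (N + 2), 1 / (n : ℂ) ^ w) - 1) atTop
        (𝓝 (riemannZeta w - 1)) :=
      Tendsto.sub_const (hts.comp (tendsto_add_atTop_nat 2)) 1
    refine hts2.congr fun N => ?_
    rw [Finset.sum_range_succ', Finset.sum_range_succ']
    have h0 : (1 : ℂ) / ((0 : ℕ) : ℂ) ^ w = 0 := by
      rw [Nat.cast_zero, Complex.zero_cpow hw0, div_zero]
    have h1 : (1 : ℂ) / (((0 : ℕ) + 1 : ℕ) : ℂ) ^ w = 1 := by norm_num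
    rw [h0, h1]
    have : ∀ k : ℕ, (1 : ℂ) / (((k + 1 + 1 : ℕ)) : ℂ) ^ w = (((k : ℝ) + 2 : ℝ) : ℂ) ^ (-w) := by
      intro k
      rw [Complex.cpow_neg, one_div]
      push_cast
      congr 2
      ring
    simp only [this]
    ring
  have T3 : Tendsto (fun N : ℕ => c₀ * ((((N : ℝ) + 1 : ℝ) : ℂ) ^ (1 - w) - 1)
      - (1 / w) * ∑ k ∈ Finset.range N, (((k : ℝ) + 2 : ℝ) : ℂ) ^ (-w)) atTop
      (𝓝 (c₀ * ((0 : ℂ) - 1) - (1 / w) * (riemannZeta w - 1))) :=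
    ((T1.sub_const 1).const_mul c₀).sub (T2.const_mul (1 / w))
  have := tendsto_nhds_unique (T0.congr fun N => (heq N)) T3
  rw [this, hc₀]
  have hw1' : (1 : ℂ) - w ≠ 0 := fun h => hw1 (sub_eq_zero.mp h).symm
  have hw1'' : w - 1 ≠ 0 := sub_ne_zero.mpr hw1
  field_simp
  ring

/-- The fractional-part function, cut off below 1. -/
noncomputable def f₀ : ℝ → ℂ := fun x => if 1 ≤ x then (↑(Int.fract x) : ℂ) else 0

lemma f₀_meas : Measurable f₀ :=
  Measurable.ite measurableSet_Ici (Complex.measurable_ofReal.comp measurable_fract)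
    measurable_const

lemma f₀_norm_le (x : ℝ) : ‖f₀ x‖ ≤ 1 := by
  unfold f₀
  split
  · exact norm_fract_le x
  · simp

lemma Iw_eq_mellin (w : ℂ) : Iw w = mellin f₀ (-w) := by
  rw [mellin, Iw]
  have h1 : ∀ x ∈ Set.Ioi (0 : ℝ), (x : ℂ) ^ (-w - 1) • f₀ x
      = (Set.Ioi (1 : ℝ)).indicator (fun x : ℝ => (↑(Int.fract x) : ℂ) * (x : ℂ) ^ (-w - 1)) x := by
    intro x _
    rcases lt_or_ge 1 x with h | h
    · rw [Set.indicator_of_mem (Set.mem_Ioi.mpr h)]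
      rw [f₀, if_pos h.le, smul_eq_mul]
      ring
    · rw [Set.indicator_of_notMem (by simpa using h)]
      rcases eq_or_lt_of_le h with h' | h'
      · subst h'
        rw [f₀, if_pos le_rfl, Int.fract_one]
        norm_num
      · rw [f₀, if_neg (by linarith), smul_zero]
  rw [setIntegral_congr_fun measurableSet_Ioi h1, setIntegral_indicator measurableSet_Ioi]
  have hset : Set.Ioi (0 : ℝ) ∩ Set.Ioi (1 : ℝ) = Set.Ioi (1 : ℝ) := by
    ext x
    simp only [Set.mem_inter_iff, Set.mem_Ioi]
    exact ⟨fun hx => hx.2, fun hx => ⟨lt_trans zero_lt_one hx, hx⟩⟩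
  rw [hset]

lemma diffI {w : ℂ} (hw : 0 < w.re) : DifferentiableAt ℂ Iw w := by
  have hdm : DifferentiableAt ℂ (mellin f₀) (-w) := by
    apply mellin_differentiableAt_of_isBigO_rpow (a := 0) (b := -w.re - 1)
    · -- locally integrable
      intro x _
      refine ⟨Metric.ball x 1, mem_nhdsWithin_of_mem_nhds (Metric.ball_mem_nhds x zero_lt_one), ?_⟩
      apply Measure.integrableOn_of_bounded (M := 1)
      · exact ((MeasureTheory.measure_ball_lt_top)).ne
      · exact f₀_meas.aestronglyMeasurable
      · exact ae_of_all _ f₀_norm_le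
    · rw [Asymptotics.isBigO_iff]
      refine ⟨1, ?_⟩
      filter_upwards [Filter.eventually_ge_atTop (1 : ℝ)] with x hx
      rw [Real.norm_eq_abs, neg_zero, Real.rpow_zero]
      simpa using f₀_norm_le x
    · simpa using neg_lt_zero.mpr hw
    · rw [Asymptotics.isBigO_iff]
      refine ⟨0, ?_⟩
      filter_upwards [Ioo_mem_nhdsGT_of_mem (by norm_num : (0:ℝ) ∈ Set.Ico (0:ℝ) 1)] with x hx
      rw [f₀, if_neg (by linarith [hx.2])]
      simp
    · simp only [Complex.neg_re]
      linarith
  have : Iw = fun w => mellin f₀ (-w) := funext Iw_eq_mellin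
  rw [this]
  exact hdm.comp w differentiableAt_id.neg

lemma preconn : IsPreconnected ({z : ℂ | 0 < z.re} \ {1}) := by
  have hV1 : Convex ℝ ({z : ℂ | 0 < z.re} ∩ {z : ℂ | 0 < z.im}) :=
    (convex_halfSpace_re_gt 0).inter (convex_halfSpace_im_gt 0)
  have hV2 : Convex ℝ ({z : ℂ | 0 < z.re} ∩ {z : ℂ | z.im < 0}) :=
    (convex_halfSpace_re_gt 0).inter (convex_halfSpace_im_lt 0)
  have hV3 : Convex ℝ ({z : ℂ | 0 < z.re} ∩ {z : ℂ | z.re < 1}) :=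
    (convex_halfSpace_re_gt 0).inter (convex_halfSpace_re_lt 1)
  have hV4 : Convex ℝ ({z : ℂ | (1 : ℝ) < z.re}) := convex_halfSpace_re_gt 1
  -- common points
  have p13 : (⟨1/2, 1/2⟩ : ℂ) ∈ ({z : ℂ | 0 < z.re} ∩ {z : ℂ | 0 < z.im}) ∩
      (({z : ℂ | 0 < z.re} ∩ {z : ℂ | z.re < 1})) := by
    exact ⟨⟨show (0:ℝ) < 1/2 by norm_num, show (0:ℝ) < 1/2 by norm_num⟩,
      show (0:ℝ) < 1/2 by norm_num, show (1:ℝ)/2 < 1 by norm_num⟩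
  have hW1 : IsPreconnected (({z : ℂ | 0 < z.re} ∩ {z : ℂ | 0 < z.im}) ∪
      ({z : ℂ | 0 < z.re} ∩ {z : ℂ | z.re < 1})) :=
    IsPreconnected.union _ p13.1 p13.2 hV1.isPreconnected hV3.isPreconnected
  have p14 : (⟨2, 1⟩ : ℂ) ∈ (({z : ℂ | 0 < z.re} ∩ {z : ℂ | 0 < z.im}) ∪
      ({z : ℂ | 0 < z.re} ∩ {z : ℂ | z.re < 1})) ∩ {z : ℂ | (1:ℝ) < z.re} := by
    exact ⟨Or.inl ⟨show (0:ℝ) < 2 by norm_num, show (0:ℝ) < 1 by norm_num⟩,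
      show (1:ℝ) < 2 by norm_num⟩
  have hW2 : IsPreconnected ((({z : ℂ | 0 < z.re} ∩ {z : ℂ | 0 < z.im}) ∪
      ({z : ℂ | 0 < z.re} ∩ {z : ℂ | z.re < 1})) ∪ {z : ℂ | (1:ℝ) < z.re}) :=
    IsPreconnected.union _ p14.1 p14.2 hW1 hV4.isPreconnected
  have p23 : (⟨1/2, -1/2⟩ : ℂ) ∈ ((({z : ℂ | 0 < z.re} ∩ {z : ℂ | 0 < z.im}) ∪
      ({z : ℂ | 0 < z.re} ∩ {z : ℂ | z.re < 1})) ∪ {z : ℂ | (1:ℝ) < z.re}) ∩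
      ({z : ℂ | 0 < z.re} ∩ {z : ℂ | z.im < 0}) := by
    exact ⟨Or.inl (Or.inr ⟨show (0:ℝ) < 1/2 by norm_num, show (1:ℝ)/2 < 1 by norm_num⟩),
      show (0:ℝ) < 1/2 by norm_num, show (-1:ℝ)/2 < 0 by norm_num⟩
  have hW3 : IsPreconnected (((({z : ℂ | 0 < z.re} ∩ {z : ℂ | 0 < z.im}) ∪
      ({z : ℂ | 0 < z.re} ∩ {z : ℂ | z.re < 1})) ∪ {z : ℂ | (1:ℝ) < z.re}) ∪
      ({z : ℂ | 0 < z.re} ∩ {z : ℂ | z.im < 0})) :=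
    IsPreconnected.union _ p23.1 p23.2 hW2 hV2.isPreconnected
  have hUeq : ({z : ℂ | 0 < z.re} \ {1}) = ((({z : ℂ | 0 < z.re} ∩ {z : ℂ | 0 < z.im}) ∪
      ({z : ℂ | 0 < z.re} ∩ {z : ℂ | z.re < 1})) ∪ {z : ℂ | (1:ℝ) < z.re}) ∪
      ({z : ℂ | 0 < z.re} ∩ {z : ℂ | z.im < 0}) := by
    ext z
    simp only [Set.mem_diff, Set.mem_singleton_iff, Set.mem_union, Set.mem_inter_iff,
      Set.mem_setOf_eq]
    constructor
    · rintro ⟨hre, hne⟩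
      rcases lt_trichotomy z.im 0 with him | him | him
      · right; exact ⟨hre, him⟩
      · rcases lt_trichotomy z.re 1 with h | h | h
        · left; left; right; exact ⟨hre, h⟩
        · exfalso; exact hne (Complex.ext h him)
        · left; right; exact h
      · left; left; left; exact ⟨hre, him⟩
    · rintro ((( ⟨h1, h2⟩ | ⟨h1, h2⟩) | h1) | ⟨h1, h2⟩)
      · exact ⟨h1, fun h => by rw [h] at h2; simp at h2⟩
      · exact ⟨h1, fun h => by rw [h] at h2; simp at h2⟩
      · refine ⟨by linarith, fun h => by rw [h] at h1; simp at h1⟩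
      · exact ⟨h1, fun h => by rw [h] at h2; simp at h2⟩
  rw [hUeq]
  exact hW3

lemma keyU {w : ℂ} (hw : 0 < w.re) (hw1 : w ≠ 1) :
    Iw w = 1 / (w - 1) - riemannZeta w / w := by
  set U : Set ℂ := {z : ℂ | 0 < z.re} \ {1} with hU
  have hUopen : IsOpen U := (isOpen_lt continuous_const Complex.continuous_re).sdiff
    isClosed_singleton
  have hF : AnalyticOnNhd ℂ Iw U := by
    apply DifferentiableOn.analyticOnNhd _ hUopen
    exact fun z hz => (diffI hz.1).differentiableWithinAt
  have hG : AnalyticOnNhd ℂ (fun z => 1 / (z - 1) - riemannZeta z / z) U := by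
    apply DifferentiableOn.analyticOnNhd _ hUopen
    intro z hz
    have hz1 : z ≠ 1 := fun h => hz.2 (by simp [h])
    have hz0 : z ≠ 0 := fun h => by rw [h] at hz; simpa using hz.1
    have d0 : DifferentiableAt ℂ (fun y : ℂ => y - 1) z := differentiableAt_id.sub_const 1
    have d1 : DifferentiableAt ℂ (fun y : ℂ => 1 / (y - 1)) z :=
      (differentiableAt_const 1).div d0 (sub_ne_zero.mpr hz1)
    have d2 : DifferentiableAt ℂ (fun y : ℂ => riemannZeta y / y) z :=
      (differentiableAt_riemannZeta hz1).div differentiableAt_id hz0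
    exact (d1.sub d2).differentiableWithinAt
  have h2U : (2 : ℂ) ∈ U := by
    refine ⟨by norm_num, ?_⟩
    simp only [Set.mem_singleton_iff]
    norm_num
  have hev : Iw =ᶠ[𝓝 (2 : ℂ)] fun z => 1 / (z - 1) - riemannZeta z / z := by
    have hopen : IsOpen {z : ℂ | 1 < z.re} := isOpen_lt continuous_const Complex.continuous_re
    have hmem : {z : ℂ | 1 < z.re} ∈ 𝓝 (2 : ℂ) := hopen.mem_nhds (by norm_num)
    filter_upwards [hmem] with z hz
    exact keyC hz
  have := hF.eqOn_of_preconnected_of_eventuallyEq hG preconn h2U hev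
  exact this ⟨hw, fun h => hw1 (by simpa using h)⟩

lemma zeta_one_sub_eq_zero {s : ℂ} (h0 : 0 < s.re) (h1 : s.re < 1)
    (hz : riemannZeta s = 0) : riemannZeta (1 - s) = 0 := by
  rw [riemannZeta_one_sub (fun n => ?_) (fun h => by rw [h] at h1; simp at h1), hz, mul_zero]
  intro h
  rw [h] at h0
  simp only [Complex.neg_re, Complex.natCast_re] at h0
  have : (0 : ℝ) ≤ (n : ℝ) := Nat.cast_nonneg n
  linarith

end RePartEqAux


theorem re_part_eq_two (a b : ℝ) (h0 : 0 < a) (h1 : a < 1)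
    (hz : riemannZeta (a + b * Complex.I) = 0) :
    -a / (a ^ 2 + b ^ 2) =
      ∫ x : ℝ in Set.Ioi (1 : ℝ), Int.fract x * Real.cos (b * Real.log x) / x ^ (2 - a) := by
  open MeasureTheory RePartEqAux in
  set s : ℂ := (a : ℂ) + (b : ℂ) * Complex.I with hs
  have hsre : s.re = a := by simp [hs]
  have hsim : s.im = b := by simp [hs]
  have hs0 : s ≠ 0 := by
    intro h
    rw [h] at hsre
    simp at hsre
    linarith
  set w : ℂ := 1 - s with hw
  have hwre : 0 < w.re := by
    rw [hw]
    simp only [Complex.sub_re, Complex.one_re, hsre]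
    linarith
  have hw1 : w ≠ 1 := fun h => hs0 (sub_eq_self.mp h)
  have hzw : riemannZeta w = 0 :=
    RePartEqAux.zeta_one_sub_eq_zero (by rw [hsre]; exact h0) (by rw [hsre]; exact h1) hz
  have hIw : RePartEqAux.Iw w = -s⁻¹ := by
    rw [RePartEqAux.keyU hwre hw1, hzw, hw]
    have e : (1 : ℂ) - s - 1 = -s := by ring
    rw [e, zero_div, sub_zero, one_div, inv_neg]
  have hexp : -w - 1 = s - 2 := by rw [hw]; ring
  have hInt : MeasureTheory.IntegrableOn
      (fun x : ℝ => (↑(Int.fract x) : ℂ) * (x : ℂ) ^ (s - 2)) (Set.Ioi (1 : ℝ)) := by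
    have := RePartEqAux.integrableOn_I hwre
    rwa [hexp] at this
  have hre2 : (RePartEqAux.Iw w).re
      = ∫ x : ℝ in Set.Ioi (1 : ℝ), ((↑(Int.fract x) : ℂ) * (x : ℂ) ^ (s - 2)).re := by
    rw [RePartEqAux.Iw, hexp]
    have := integral_re (𝕜 := ℂ) hInt
    simpa using this.symm
  have hint : ∀ x ∈ Set.Ioi (1 : ℝ), ((↑(Int.fract x) : ℂ) * (x : ℂ) ^ (s - 2)).re
      = Int.fract x * Real.cos (b * Real.log x) / x ^ (2 - a) := by
    intro x hx
    have hx0 : (0 : ℝ) < x := lt_trans zero_lt_one hx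
    rw [Complex.cpow_def_of_ne_zero (by exact_mod_cast hx0.ne'), ← Complex.ofReal_log hx0.le,
      Complex.re_ofReal_mul, Complex.exp_re]
    have hre : ((Real.log x : ℂ) * (s - 2)).re = (a - 2) * Real.log x := by
      simp [Complex.mul_re, hsre]
      ring
    have him : ((Real.log x : ℂ) * (s - 2)).im = b * Real.log x := by
      simp [Complex.mul_im, hsim]
      ring
    rw [hre, him]
    have hexp' : Real.exp ((a - 2) * Real.log x) = x ^ (a - 2) := by
      rw [Real.rpow_def_of_pos hx0]
      ring_nf
    rw [hexp']
    have hneg : x ^ (a - 2) = (x ^ (2 - a))⁻¹ := by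
      rw [← Real.rpow_neg hx0.le]
      ring_nf
    rw [hneg]
    ring
  have hfinal : (-s⁻¹).re = -a / (a ^ 2 + b ^ 2) := by
    rw [Complex.neg_re, Complex.inv_re, Complex.normSq_apply, hsre, hsim]
    rw [neg_div]
    ring_nf
  calc -a / (a ^ 2 + b ^ 2) = (-s⁻¹).re := hfinal.symm
    _ = (RePartEqAux.Iw w).re := by rw [hIw]
    _ = ∫ x : ℝ in Set.Ioi (1 : ℝ), ((↑(Int.fract x) : ℂ) * (x : ℂ) ^ (s - 2)).re := hre2
    _ = ∫ x : ℝ in Set.Ioi (1 : ℝ), Int.fract x * Real.cos (b * Real.log x) / x ^ (2 - a) :=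
      MeasureTheory.setIntegral_congr_fun measurableSet_Ioi hint
end
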